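/- arXiv:quant-ph/0105104 — 2 statements merged into one kernel-verified Lean document; each statement's English description precedes it below -/
import Mathlib

section
/- If ψ₁ and ψ₂ are Schmidt orthogonal unit vectors in H₁ ⊗ H₂, then any linear combination λ₁ψ₁ + λ₂ψ₂ with |λ₁|² + |λ₂|² = 1 is a unit vector whose set of nonzero Schmidt coefficients is {|λ₁|² p : p nonzero Schmidt coefficient of ψ₁} ∪ {|λ₂|² q : q nonzero Schmidt coefficient of ψ₂} (counted with multiplicity). -/
open scoped BigOperators ComplexOrder
open Matrix

noncomputable section

/-- Finite-dimensional complex Hilbert space of dimension `m`. -/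
abbrev H (m : ℕ) := EuclideanSpace ℂ (Fin m)

/-- The tensor product `H m ⊗ H n`, realized as `EuclideanSpace ℂ (Fin m × Fin n)`. -/
abbrev HT (m n : ℕ) := EuclideanSpace ℂ (Fin m × Fin n)

/-- Elementary tensor `a ⊗ b`. -/
def tensorVec {m n : ℕ} (a : H m) (b : H n) : HT m n :=
  WithLp.toLp 2 (fun p => a p.1 * b p.2)

/-- The projection `|ψ⟩⟨ψ|` as a matrix. -/
def proj {m n : ℕ} (ψ : HT m n) : Matrix (Fin m × Fin n) (Fin m × Fin n) ℂ :=
  Matrix.of fun x y => ψ x * (starRingEnd ℂ) (ψ y)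

/-- The projection `|a⟩⟨a|` on a single factor. -/
def proj1 {m : ℕ} (a : H m) : Matrix (Fin m) (Fin m) ℂ :=
  Matrix.of fun i j => a i * (starRingEnd ℂ) (a j)

/-- Partial trace over the second factor. -/
def ptrace2 {m n : ℕ} (M : Matrix (Fin m × Fin n) (Fin m × Fin n) ℂ) :
    Matrix (Fin m) (Fin m) ℂ :=
  Matrix.of fun i j => ∑ k : Fin n, M (i, k) (j, k)

/-- Partial trace over the first factor. -/
def ptrace1 {m n : ℕ} (M : Matrix (Fin m × Fin n) (Fin m × Fin n) ℂ) :
    Matrix (Fin n) (Fin n) ℂ :=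
  Matrix.of fun i j => ∑ k : Fin m, M (k, i) (k, j)

/-- Von Neumann entropy `-Tr(ρ ln ρ)` of a Hermitian matrix, via its eigenvalues. -/
def vnEnt {k : ℕ} {M : Matrix (Fin k) (Fin k) ℂ} (h : M.IsHermitian) : ℝ :=
  ∑ i, Real.negMulLog (h.eigenvalues i)

/-- Kronecker product of square matrices. -/
def kron {m n : ℕ} (A : Matrix (Fin m) (Fin m) ℂ) (B : Matrix (Fin n) (Fin n) ℂ) :
    Matrix (Fin m × Fin n) (Fin m × Fin n) ℂ :=
  Matrix.of fun p q => A p.1 q.1 * B p.2 q.2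

/-- Action of a matrix on a vector. -/
def matVec {m n : ℕ} (M : Matrix (Fin m × Fin n) (Fin m × Fin n) ℂ) (ψ : HT m n) :
    HT m n := WithLp.toLp 2 (fun p => ∑ q, M p q * ψ q)

/-- The canonical pure state with Schmidt coefficients `μ`. -/
def stdVec {k : ℕ} (μ : Fin k → ℝ) : HT k k :=
  WithLp.toLp 2 (fun p => if p.1 = p.2 then (Real.sqrt (μ p.1) : ℂ) else 0)

/-- Strong Schmidt orthogonality: the supports of both reduced density matrices
are orthogonal. -/
def SchmidtOrthogonal {m n : ℕ} (ψ φ : HT m n) : Prop :=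
  ptrace2 (proj ψ) * ptrace2 (proj φ) = 0 ∧ ptrace1 (proj ψ) * ptrace1 (proj φ) = 0

/-- Image of `ψ` under the tensor product of two isometric embeddings. -/
def tensorMap {m n m' n' : ℕ} (f : H m →ₗᵢ[ℂ] H m') (g : H n →ₗᵢ[ℂ] H n')
    (ψ : HT m n) : HT m' n' :=
  WithLp.toLp 2 (fun p => ∑ q : Fin m × Fin n,
    ψ q * f (EuclideanSpace.single q.1 1) p.1 * g (EuclideanSpace.single q.2 1) p.2)

/-- Finite probability distribution. -/
def IsProbDist {k : ℕ} (p : Fin k → ℝ) : Prop := (∀ i, 0 ≤ p i) ∧ ∑ i, p i = 1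

/-- Multiset of nonzero Schmidt coefficients of `ψ` (eigenvalues of the reduced
density matrix). -/
def schmidtMultiset {m n : ℕ} (ψ : HT m n) (h : (ptrace2 (proj ψ)).IsHermitian) :
    Multiset ℝ :=
  (Finset.univ.val.map h.eigenvalues).filter (· ≠ 0)

/-- Trace norm of a matrix. -/
def trNorm {a b : ℕ} (A : Matrix (Fin a) (Fin b) ℂ) : ℝ :=
  ∑ i, Real.sqrt ((Matrix.posSemidef_conjTranspose_mul_self A).1.eigenvalues i)

/-- The greatest cross norm. -/
def gcn {m n : ℕ} (M : Matrix (Fin m × Fin n) (Fin m × Fin n) ℂ) : ℝ :=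
  sInf { t : ℝ | ∃ (k : ℕ) (x : Fin k → Matrix (Fin m) (Fin m) ℂ)
    (y : Fin k → Matrix (Fin n) (Fin n) ℂ),
    M = ∑ i, kron (x i) (y i) ∧ t = ∑ i, trNorm (x i) * trNorm (y i) }

/-- Density operator. -/
def IsDensity {d : Type*} [Fintype d] [DecidableEq d] (M : Matrix d d ℂ) : Prop :=
  M.PosSemidef ∧ M.trace = 1

lemma orthonormal_sum_form {N : ℕ} {ι : Type*} [Fintype ι] [DecidableEq ι]
    {F : ι → H N} (hF : Orthonormal ℂ F) (s t : ι) :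
    (∑ k, F s k * (starRingEnd ℂ) (F t k)) = if s = t then 1 else 0 := by
  have h := orthonormal_iff_ite.mp hF t s
  rw [PiLp.inner_apply] at h
  simp only [RCLike.inner_apply] at h
  calc (∑ k, F s k * (starRingEnd ℂ) (F t k))
      = ∑ k, (starRingEnd ℂ) (F t k) * F s k := by simp [mul_comm]
    _ = if t = s then 1 else 0 := by rw [← h]; exact Finset.sum_congr rfl fun k _ => mul_comm _ _
    _ = if s = t then 1 else 0 := by simp [eq_comm]

lemma superpos_facts {m n : ℕ} {ι : Type*} [Fintype ι] [DecidableEq ι]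
    {E : ι → H m} {F : ι → H n} (hE : Orthonormal ℂ E) (hF : Orthonormal ℂ F)
    (cc : ι → ℂ) {ψ : HT m n} (hψ : ψ = ∑ s, cc s • tensorVec (E s) (F s)) :
    (∀ i j, ptrace2 (proj ψ) i j
        = ∑ s, ((‖cc s‖ : ℂ)) ^ 2 * (E s i * (starRingEnd ℂ) (E s j)))
    ∧ ‖ψ‖ ^ 2 = ∑ s, ‖cc s‖ ^ 2 := by
  have hψp : ∀ pr : Fin m × Fin n, ψ pr = ∑ s, cc s * (E s pr.1 * F s pr.2) := by
    intro pr
    rw [hψ, WithLp.ofLp_sum, Finset.sum_apply pr Finset.univ _]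
    rfl
  have key : ∀ i j, ptrace2 (proj ψ) i j
      = ∑ s, ((‖cc s‖ : ℂ)) ^ 2 * (E s i * (starRingEnd ℂ) (E s j)) := by
    intro i j
    have step : ∀ k : Fin n, ψ (i, k) * (starRingEnd ℂ) (ψ (j, k))
        = ∑ s, ∑ t, (cc s * (starRingEnd ℂ) (cc t) * (E s i * (starRingEnd ℂ) (E t j)))
            * (F s k * (starRingEnd ℂ) (F t k)) := by
      intro k
      rw [hψp (i, k), hψp (j, k), map_sum, Finset.sum_mul_sum]
      refine Finset.sum_congr rfl fun s _ => Finset.sum_congr rfl fun t _ => ?_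
      simp only [_root_.map_mul]
      ring
    have : ptrace2 (proj ψ) i j
        = ∑ s, ∑ t, (cc s * (starRingEnd ℂ) (cc t) * (E s i * (starRingEnd ℂ) (E t j)))
            * (∑ k, F s k * (starRingEnd ℂ) (F t k)) := by
      show (∑ k, ψ (i, k) * (starRingEnd ℂ) (ψ (j, k))) = _
      rw [Finset.sum_congr rfl fun k _ => step k, Finset.sum_comm]
      refine Finset.sum_congr rfl fun s _ => ?_
      rw [Finset.sum_comm]
      exact Finset.sum_congr rfl fun t _ => (Finset.mul_sum _ _ _).symm
    rw [this]
    refine Finset.sum_congr rfl fun s _ => ?_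
    rw [Finset.sum_eq_single s]
    · rw [orthonormal_sum_form hF s s, if_pos rfl, mul_one, Complex.mul_conj']
    · intro t _ hts
      rw [orthonormal_sum_form hF s t, if_neg (Ne.symm hts), mul_zero]
    · intro habs; exact absurd (Finset.mem_univ s) habs
  refine ⟨key, ?_⟩
  have hnorm2 : ((‖ψ‖ ^ 2 : ℝ) : ℂ) = ((∑ s, ‖cc s‖ ^ 2 : ℝ) : ℂ) := by
    have h1 : ‖ψ‖ ^ 2 = ∑ pr : Fin m × Fin n, ‖ψ pr‖ ^ 2 := by
      rw [EuclideanSpace.norm_eq]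
      exact Real.sq_sqrt (Finset.sum_nonneg fun _ _ => sq_nonneg _)
    rw [h1]
    push_cast
    calc (∑ pr : Fin m × Fin n, (‖ψ pr‖ : ℂ) ^ 2)
        = ∑ i, ∑ k, (‖ψ (i, k)‖ : ℂ) ^ 2 := Fintype.sum_prod_type _
      _ = ∑ i, ptrace2 (proj ψ) i i := by
          refine Finset.sum_congr rfl fun i _ => ?_
          show _ = ∑ k, ψ (i, k) * (starRingEnd ℂ) (ψ (i, k))
          exact Finset.sum_congr rfl fun k _ => (Complex.mul_conj' _).symm
      _ = ∑ i, ∑ s, ((‖cc s‖ : ℂ)) ^ 2 * (E s i * (starRingEnd ℂ) (E s i)) := by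
          exact Finset.sum_congr rfl fun i _ => key i i
      _ = ∑ s, ((‖cc s‖ : ℂ)) ^ 2 * (∑ i, E s i * (starRingEnd ℂ) (E s i)) := by
          rw [Finset.sum_comm]
          exact Finset.sum_congr rfl fun s _ => (Finset.mul_sum _ _ _).symm
      _ = ∑ s, (‖cc s‖ : ℂ) ^ 2 := by
          refine Finset.sum_congr rfl fun s _ => ?_
          rw [orthonormal_sum_form hE s s, if_pos rfl, mul_one]
  exact_mod_cast hnorm2

open Polynomial in
lemma charpoly_conj_unitary {N : ℕ} (U A : Matrix (Fin N) (Fin N) ℂ)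
    (hU : U * star U = 1) : (U * A * star U).charpoly = A.charpoly := by
  have hU' : star U * U = 1 := mul_eq_one_comm.mp hU
  have hcomm : U.map C * Matrix.scalar (Fin N) (X : ℂ[X])
      = Matrix.scalar (Fin N) (X : ℂ[X]) * U.map C :=
    (Matrix.scalar_commute (X : ℂ[X]) (fun r' => Commute.all _ _) (U.map C)).symm
  have hcm : charmatrix (U * A * star U)
      = U.map C * charmatrix A * (star U).map C := by
    simp only [charmatrix, RingHom.mapMatrix_apply, mul_sub, sub_mul]
    congr 1
    · rw [hcomm, mul_assoc, ← Matrix.map_mul, hU,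
        Matrix.map_one _ (map_zero C) (map_one C), mul_one]
    · rw [← Matrix.map_mul, ← Matrix.map_mul]
  rw [Matrix.charpoly, Matrix.charpoly, hcm, det_mul, det_mul, mul_comm,
    ← mul_assoc, ← det_mul, ← Matrix.map_mul, hU', Matrix.map_one _ (map_zero C) (map_one C),
    det_one, one_mul]

open Polynomial in
lemma charpoly_diagonal {N : ℕ} (d : Fin N → ℂ) :
    (Matrix.diagonal d).charpoly = ∏ i, (X - C (d i)) := by
  have : charmatrix (Matrix.diagonal d) = Matrix.diagonal fun i => X - C (d i) := by
    ext i j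
    by_cases h : i = j
    · subst h; simp [charmatrix_apply_eq]
    · simp [charmatrix_apply_ne _ _ _ h, Matrix.diagonal_apply_ne _ h]
  rw [Matrix.charpoly, this, det_diagonal]

open Polynomial in
lemma charpoly_hermitian {N : ℕ} {M : Matrix (Fin N) (Fin N) ℂ} (hM : M.IsHermitian) :
    M.charpoly = ∏ i, (X - C (hM.eigenvalues i : ℂ)) := by
  conv_lhs => rw [hM.spectral_theorem, Unitary.conjStarAlgAut_apply]
  rw [charpoly_conj_unitary _ _ (Matrix.mem_unitaryGroup_iff.mp (hM.eigenvectorUnitary).2)]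
  exact _root_.charpoly_diagonal _

open Polynomial in
lemma eig_multiset_of_charpoly {N : ℕ} {M : Matrix (Fin N) (Fin N) ℂ} (hM : M.IsHermitian)
    (v : Fin N → ℝ) (hchar : M.charpoly = ∏ i, (X - C ((v i : ℂ)))) :
    Finset.univ.val.map hM.eigenvalues = Finset.univ.val.map v := by
  have h1 := charpoly_hermitian hM
  rw [hchar] at h1
  have h3 := congrArg Polynomial.roots
    (show (Multiset.map (fun a => X - C a) (Finset.univ.val.map fun i => ((v i : ℂ)))).prod
      = (Multiset.map (fun a => X - C a)
          (Finset.univ.val.map fun i => ((hM.eigenvalues i : ℂ)))).prod by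
      simpa [Finset.prod_eq_multiset_prod, Multiset.map_map, Function.comp_def] using h1)
  rw [roots_multiset_prod_X_sub_C, roots_multiset_prod_X_sub_C] at h3
  have h4 : Multiset.map (fun x : ℝ => (x : ℂ)) (Finset.univ.val.map hM.eigenvalues)
      = Multiset.map (fun x : ℝ => (x : ℂ)) (Finset.univ.val.map v) := by
    rw [Multiset.map_map, Multiset.map_map]
    exact h3.symm
  exact Multiset.map_injective (fun a b h => by exact_mod_cast h) h4

lemma eig_filter_of_orthonormal_sum {m : ℕ} {ι : Type*} [Fintype ι] [DecidableEq ι]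
    {E : ι → H m} (hE : Orthonormal ℂ E) (μ : ι → ℝ)
    {M : Matrix (Fin m) (Fin m) ℂ} (hM : M.IsHermitian)
    (hMeq : ∀ i j, M i j = ∑ s, (μ s : ℂ) * (E s i * (starRingEnd ℂ) (E s j))) :
    (Finset.univ.val.map hM.eigenvalues).filter (· ≠ 0)
      = (Finset.univ.val.map μ).filter (· ≠ 0) := by
  classical
  have hcard : Fintype.card ι ≤ m := by
    simpa using hE.linearIndependent.fintype_card_le_finrank
  obtain ⟨f⟩ : Nonempty (ι ↪ Fin m) :=
    Function.Embedding.nonempty_of_card_le (by simpa using hcard)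
  set v : Fin m → H m := fun x => if h : ∃ t, f t = x then E h.choose else 0 with hv
  set μ' : Fin m → ℝ := fun x => if h : ∃ t, f t = x then μ h.choose else 0 with hμ'
  have hvf : ∀ t, v (f t) = E t := by
    intro t
    have h : ∃ t', f t' = f t := ⟨t, rfl⟩
    have := f.injective h.choose_spec
    simp only [hv, dif_pos h, this]
  have hμ'f : ∀ t, μ' (f t) = μ t := by
    intro t
    have h : ∃ t', f t' = f t := ⟨t, rfl⟩
    have := f.injective h.choose_spec
    simp only [hμ', dif_pos h, this]
  have horth : Orthonormal ℂ ((Set.range f).restrict v) := by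
    rw [orthonormal_iff_ite]
    rintro ⟨x, tx, htx⟩ ⟨y, ty, hty⟩
    have hx : v x = E tx := by rw [← htx, hvf]
    have hy : v y = E ty := by rw [← hty, hvf]
    change inner ℂ (v x) (v y) = _
    rw [hx, hy]
    rw [orthonormal_iff_ite.mp hE tx ty]
    congr 1
    simp only [eq_iff_iff, Subtype.mk_eq_mk, ← htx, ← hty]
    exact ⟨congrArg f, fun h => f.injective h⟩
  obtain ⟨b, hb⟩ := horth.exists_orthonormalBasis_extension_of_card_eq
    (by simp)
  have hbf : ∀ t, b (f t) = E t := by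
    intro t
    rw [hb (f t) ⟨t, rfl⟩, hvf]
  set U : Matrix (Fin m) (Fin m) ℂ := Matrix.of fun i x => b x i with hUdef
  have hUU : star U * U = 1 := by
    ext x y
    rw [Matrix.mul_apply, Matrix.one_apply]
    have := orthonormal_iff_ite.mp b.orthonormal x y
    rw [PiLp.inner_apply] at this
    simp only [RCLike.inner_apply] at this
    simpa [hUdef, Matrix.star_apply, mul_comm] using this
  have hU : U * star U = 1 := mul_eq_one_comm.mp hUU
  have hMdiag : M = U * Matrix.diagonal (fun x => (μ' x : ℂ)) * star U := by
    ext i j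
    rw [hMeq i j, Matrix.mul_apply]
    simp only [Matrix.mul_diagonal, Matrix.star_apply, hUdef, Matrix.of_apply]
    have hzero : ∀ x ∈ Finset.univ, x ∉ Finset.univ.map f →
        (b x i : ℂ) * (μ' x : ℂ) * star (b x j) = 0 := by
      intro x _ hx
      have : ¬∃ t, f t = x := by
        intro ⟨t, ht⟩; exact hx (Finset.mem_map.mpr ⟨t, Finset.mem_univ t, ht⟩)
      simp [hμ', dif_neg this]
    rw [← Finset.sum_subset (Finset.subset_univ (Finset.univ.map f)) hzero,
      Finset.sum_map]
    refine Finset.sum_congr rfl fun t _ => ?_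
    rw [hμ'f, hbf t, Complex.star_def]
    ring
  have hchar : M.charpoly = ∏ x, (Polynomial.X - Polynomial.C ((μ' x : ℂ))) := by
    rw [hMdiag, charpoly_conj_unitary _ _ hU, _root_.charpoly_diagonal]
  have heig := eig_multiset_of_charpoly hM μ' hchar
  rw [heig]
  -- now split the multiset
  have hle : (Finset.univ.map f).val ≤ (Finset.univ : Finset (Fin m)).val :=
    Finset.val_le_iff.mpr (Finset.subset_univ _)
  have hsplit : (Finset.univ : Finset (Fin m)).val
      = (Finset.univ.map f).val + (Finset.univ \ Finset.univ.map f).val := by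
    rw [Finset.sdiff_val, add_tsub_cancel_of_le hle]
  rw [hsplit, Multiset.map_add, Multiset.filter_add]
  have h2 : ((Finset.univ \ Finset.univ.map f).val.map μ').filter (· ≠ 0) = 0 := by
    rw [Multiset.filter_eq_nil]
    intro a ha
    obtain ⟨x, hx, rfl⟩ := Multiset.mem_map.mp ha
    have hx' : x ∉ Finset.univ.map f := (Finset.mem_sdiff.mp hx).2
    have : ¬∃ t, f t = x := by
      intro ⟨t, ht⟩; exact hx' (Finset.mem_map.mpr ⟨t, Finset.mem_univ t, ht⟩)
    simp [hμ', dif_neg this]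
  rw [h2, add_zero]
  congr 1
  show ((Finset.univ.val.map f).map μ') = _
  rw [Multiset.map_map]
  exact Multiset.map_congr rfl fun t _ => hμ'f t

/-- A superposition `λ₁ψ₁ + λ₂ψ₂` of Schmidt orthogonal unit vectors is a unit
vector whose multiset of nonzero Schmidt coefficients is the union of the
rescaled multisets `|λ₁|²·pᵢ` and `|λ₂|²·qⱼ` (with multiplicity). -/
theorem schmidt_coefficients_of_superposition {m n k₁ k₂ : ℕ}
    (ψ₁ ψ₂ : HT m n) (hψ₁ : ‖ψ₁‖ = 1) (hψ₂ : ‖ψ₂‖ = 1)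
    (p : Fin k₁ → ℝ) (q : Fin k₂ → ℝ) (hp : ∀ i, 0 ≤ p i) (hq : ∀ j, 0 ≤ q j)
    (a : Fin k₁ → H m) (c : Fin k₂ → H m) (b : Fin k₁ → H n) (d : Fin k₂ → H n)
    (hac : Orthonormal ℂ (Sum.elim a c)) (hbd : Orthonormal ℂ (Sum.elim b d))
    (hdec₁ : ψ₁ = ∑ i, (Real.sqrt (p i) : ℂ) • tensorVec (a i) (b i))
    (hdec₂ : ψ₂ = ∑ j, (Real.sqrt (q j) : ℂ) • tensorVec (c j) (d j))
    (l₁ l₂ : ℂ) (hl : ‖l₁‖ ^ 2 + ‖l₂‖ ^ 2 = 1)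
    (h : (ptrace2 (proj (l₁ • ψ₁ + l₂ • ψ₂))).IsHermitian) :
    ‖l₁ • ψ₁ + l₂ • ψ₂‖ = 1 ∧
    schmidtMultiset (l₁ • ψ₁ + l₂ • ψ₂) h
      = ((Finset.univ.val.map fun i => ‖l₁‖ ^ 2 * p i)
          + (Finset.univ.val.map fun j => ‖l₂‖ ^ 2 * q j)).filter (· ≠ 0) := by

  classical
  set ψ := l₁ • ψ₁ + l₂ • ψ₂ with hψdef
  set cc : Fin k₁ ⊕ Fin k₂ → ℂ :=
    Sum.elim (fun i => l₁ * (Real.sqrt (p i) : ℂ)) (fun j => l₂ * (Real.sqrt (q j) : ℂ)) with hccdef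
  set μ : Fin k₁ ⊕ Fin k₂ → ℝ :=
    Sum.elim (fun i => ‖l₁‖ ^ 2 * p i) (fun j => ‖l₂‖ ^ 2 * q j) with hμdef
  have hψeq : ψ = ∑ s, cc s • tensorVec (Sum.elim a c s) (Sum.elim b d s) := by
    rw [hψdef, hdec₁, hdec₂, Fintype.sum_sum_type]
    simp only [hccdef, Sum.elim_inl, Sum.elim_inr]
    rw [Finset.smul_sum, Finset.smul_sum]
    congr 1 <;> exact Finset.sum_congr rfl fun i _ => smul_smul _ _ _
  obtain ⟨hρ, hnorm⟩ := superpos_facts hac hbd cc hψeq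
  have hccμ : ∀ s, ‖cc s‖ ^ 2 = μ s := by
    rintro (i | j)
    · simp [hccdef, hμdef, norm_mul, mul_pow, Complex.norm_real, Real.norm_eq_abs,
        sq_abs, Real.sq_sqrt (hp i)]
    · simp [hccdef, hμdef, norm_mul, mul_pow, Complex.norm_real, Real.norm_eq_abs,
        sq_abs, Real.sq_sqrt (hq j)]
  have ha : Orthonormal ℂ a := hac.comp Sum.inl Sum.inl_injective
  have hb : Orthonormal ℂ b := hbd.comp Sum.inl Sum.inl_injective
  have hsum_p : ∑ i, p i = 1 := by
    have := (superpos_facts ha hb (fun i => (Real.sqrt (p i) : ℂ)) hdec₁).2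
    rw [hψ₁, one_pow] at this
    have h2 : ∑ i, ‖((Real.sqrt (p i) : ℂ))‖ ^ 2 = ∑ i, p i :=
      Finset.sum_congr rfl fun i _ => by
        simp [Complex.norm_real, Real.norm_eq_abs, sq_abs, Real.sq_sqrt (hp i)]
    rw [← h2]
    exact this.symm
  have hc : Orthonormal ℂ c := hac.comp Sum.inr Sum.inr_injective
  have hd : Orthonormal ℂ d := hbd.comp Sum.inr Sum.inr_injective
  have hsum_q : ∑ j, q j = 1 := by
    have := (superpos_facts hc hd (fun j => (Real.sqrt (q j) : ℂ)) hdec₂).2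
    rw [hψ₂, one_pow] at this
    have h2 : ∑ j, ‖((Real.sqrt (q j) : ℂ))‖ ^ 2 = ∑ j, q j :=
      Finset.sum_congr rfl fun j _ => by
        simp [Complex.norm_real, Real.norm_eq_abs, sq_abs, Real.sq_sqrt (hq j)]
    rw [← h2]
    exact this.symm
  have hnorm1 : ‖ψ‖ = 1 := by
    have h2 : ‖ψ‖ ^ 2 = 1 := by
      rw [hnorm]
      calc (∑ s, ‖cc s‖ ^ 2) = ∑ s, μ s := Finset.sum_congr rfl fun s _ => hccμ s
        _ = ‖l₁‖ ^ 2 * ∑ i, p i + ‖l₂‖ ^ 2 * ∑ j, q j := by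
            rw [hμdef, Fintype.sum_sum_type, Finset.mul_sum, Finset.mul_sum]
            simp only [Sum.elim_inl, Sum.elim_inr]
        _ = 1 := by rw [hsum_p, hsum_q, mul_one, mul_one, hl]
    nlinarith [norm_nonneg ψ]
  refine ⟨hnorm1, ?_⟩
  have hMeq : ∀ i j, ptrace2 (proj ψ) i j
      = ∑ s, (μ s : ℂ) * (Sum.elim a c s i * (starRingEnd ℂ) (Sum.elim a c s j)) := by
    intro i j
    rw [hρ i j]
    refine Finset.sum_congr rfl fun s _ => ?_
    congr 1
    rw [← hccμ s]
    push_cast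
    ring
  have hfinal := eig_filter_of_orthonormal_sum hac μ h hMeq
  rw [schmidtMultiset, hfinal]
  congr 1
  have huniv : (Finset.univ : Finset (Fin k₁ ⊕ Fin k₂)).val
      = Finset.univ.val.map Sum.inl + Finset.univ.val.map Sum.inr := by
    rw [← Finset.univ_disjSum_univ, Finset.val_disjSum]
    rfl
  rw [huniv, Multiset.map_add, Multiset.map_map, Multiset.map_map]
  rfl


end
end

section
/- Let E be an entanglement measure on mixed states satisfying (M1)–(M5). Then E(ρ) = 0 for every separable density operator ρ on H₁ ⊗ H₂. -/
open scoped BigOperators ComplexOrder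
open Matrix

noncomputable section

/-- Kronecker product of rectangular matrices. -/
def kronR {m m' n n' : ℕ} (A : Matrix (Fin m') (Fin m) ℂ) (B : Matrix (Fin n') (Fin n) ℂ) :
    Matrix (Fin m' × Fin n') (Fin m × Fin n) ℂ :=
  Matrix.of fun p q => A p.1 q.1 * B p.2 q.2

/-- Separability of a density operator. -/
def SepDensity {m n : ℕ} (ρ : Matrix (Fin m × Fin n) (Fin m × Fin n) ℂ) : Prop :=
  ∃ (k : ℕ) (ω : Fin k → ℝ) (ρ₁ : Fin k → Matrix (Fin m) (Fin m) ℂ)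
    (ρ₂ : Fin k → Matrix (Fin n) (Fin n) ℂ),
    (∀ i, 0 ≤ ω i) ∧ (∀ i, IsDensity (ρ₁ i)) ∧ (∀ i, IsDensity (ρ₂ i)) ∧
    ρ = ∑ i, (ω i : ℂ) • kron (ρ₁ i) (ρ₂ i)

lemma sum_sq_norm {ι : Type*} [Fintype ι] (a : EuclideanSpace ℂ ι) (h : ‖a‖ = 1) :
    ∑ i, ‖a i‖ ^ 2 = 1 := by
  have h1 := EuclideanSpace.norm_eq a
  rw [h] at h1
  have h0 : 0 ≤ ∑ i, ‖a i‖ ^ 2 := Finset.sum_nonneg fun i _ => sq_nonneg _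
  nlinarith [Real.sq_sqrt h0]

lemma norm_tensorVec {m n : ℕ} {a : H m} {b : H n} (ha : ‖a‖ = 1) (hb : ‖b‖ = 1) :
    ‖tensorVec a b‖ = 1 := by
  rw [EuclideanSpace.norm_eq]
  have key : ∑ p : Fin m × Fin n, ‖tensorVec a b p‖ ^ 2
      = (∑ i, ‖a i‖ ^ 2) * (∑ j, ‖b j‖ ^ 2) := by
    rw [Fintype.sum_prod_type, Finset.sum_mul_sum]
    exact Finset.sum_congr rfl fun i _ => Finset.sum_congr rfl fun j _ => by
      simp [tensorVec, norm_mul, mul_pow]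
  rw [key, sum_sq_norm a ha, sum_sq_norm b hb]
  simp

lemma trace_proj {m n : ℕ} {ψ : HT m n} (h : ‖ψ‖ = 1) : (proj ψ).trace = 1 := by
  have : (proj ψ).trace = ((∑ p, ‖ψ p‖ ^ 2 : ℝ) : ℂ) := by
    push_cast
    simp [Matrix.trace, Matrix.diag, proj, Complex.mul_conj']
  rw [this, sum_sq_norm ψ h]
  norm_num

lemma posSemidef_proj {m n : ℕ} (ψ : HT m n) : (proj ψ).PosSemidef := by
  have : proj ψ = (Matrix.of fun p (_ : Fin 1) => ψ p) * (Matrix.of fun p (_ : Fin 1) => ψ p)ᴴ := by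
    ext p q
    simp [proj, Matrix.mul_apply, Matrix.conjTranspose_apply]
  rw [this]
  exact Matrix.posSemidef_self_mul_conjTranspose _

lemma isDensity_proj {m n : ℕ} {ψ : HT m n} (h : ‖ψ‖ = 1) : IsDensity (proj ψ) :=
  ⟨posSemidef_proj ψ, trace_proj h⟩

lemma posSemidef_real_smul {d : Type*} [Fintype d] {M : Matrix d d ℂ}
    (hM : M.PosSemidef) {c : ℝ} (hc : 0 ≤ c) : ((c : ℂ) • M).PosSemidef := by
  refine Matrix.PosSemidef.of_dotProduct_mulVec_nonneg ?_ ?_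
  · have h1 := hM.1
    unfold Matrix.IsHermitian at *
    rw [Matrix.conjTranspose_smul, h1]
    congr 1
    simp [Complex.star_def, Complex.conj_ofReal]
  · intro x
    rw [Matrix.smul_mulVec, dotProduct_smul, smul_eq_mul]
    exact mul_nonneg (by positivity) (hM.dotProduct_mulVec_nonneg x)

lemma isDensity_convex {d : Type*} [Fintype d] [DecidableEq d] {ι : Type*}
    (s : Finset ι) (p : ι → ℝ) (σ : ι → Matrix d d ℂ)
    (hp : ∀ i ∈ s, 0 ≤ p i) (hσ : ∀ i ∈ s, IsDensity (σ i)) (hsum : ∑ i ∈ s, p i = 1) :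
    IsDensity (∑ i ∈ s, (p i : ℂ) • σ i) := by
  constructor
  · refine Matrix.PosSemidef.of_dotProduct_mulVec_nonneg ?_ ?_
    · unfold Matrix.IsHermitian
      rw [Matrix.conjTranspose_sum]
      refine Finset.sum_congr rfl fun i hi => ?_
      exact (posSemidef_real_smul (hσ i hi).1 (hp i hi)).1
    · intro x
      have hmv : (∑ i ∈ s, (p i : ℂ) • σ i) *ᵥ x = ∑ i ∈ s, ((p i : ℂ) • σ i) *ᵥ x := by
        ext j
        simp [Matrix.mulVec, dotProduct, Matrix.sum_apply, Finset.sum_mul]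
        rw [Finset.sum_comm]
      have h2 : star x ⬝ᵥ (∑ i ∈ s, ((p i : ℂ) • σ i) *ᵥ x)
          = ∑ i ∈ s, star x ⬝ᵥ (((p i : ℂ) • σ i) *ᵥ x) := by
        simp only [dotProduct, Finset.sum_apply, Finset.mul_sum]
        exact Finset.sum_comm ..
      rw [hmv, h2]
      exact Finset.sum_nonneg fun i hi => (posSemidef_real_smul (hσ i hi).1 (hp i hi)).dotProduct_mulVec_nonneg x
  · rw [Matrix.trace_sum]
    have : ∀ i ∈ s, ((p i : ℂ) • σ i).trace = (p i : ℂ) := by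
      intro i hi
      rw [Matrix.trace_smul, (hσ i hi).2, smul_eq_mul, mul_one]
    rw [Finset.sum_congr rfl this, ← Complex.ofReal_sum, hsum, Complex.ofReal_one]
lemma trace_eq_sum_eig {d : ℕ} {A : Matrix (Fin d) (Fin d) ℂ} (hA : A.IsHermitian) :
    (↑(∑ i, hA.eigenvalues i) : ℂ) = A.trace := by
  nth_rewrite 2 [hA.spectral_theorem]
  rw [Unitary.conjStarAlgAut_apply, Matrix.trace_mul_cycle, (Matrix.mem_unitaryGroup_iff').mp hA.eigenvectorUnitary.2]
  simp only [one_mul]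
  rw [Matrix.trace_diagonal]
  simp

lemma density_decomp {d : ℕ} {ρ : Matrix (Fin d) (Fin d) ℂ} (h : IsDensity ρ) :
    ∃ (lam : Fin d → ℝ) (v : Fin d → H d),
      (∀ i, 0 ≤ lam i) ∧ ∑ i, lam i = 1 ∧ (∀ i, ‖v i‖ = 1) ∧
      ρ = ∑ i, (lam i : ℂ) • proj1 (v i) := by
  have hH : ρ.IsHermitian := h.1.1
  set U : Matrix (Fin d) (Fin d) ℂ := (hH.eigenvectorUnitary : Matrix (Fin d) (Fin d) ℂ) with hU
  refine ⟨hH.eigenvalues, fun k => (WithLp.toLp 2 (fun i => U i k) : H d),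
    fun i => h.1.eigenvalues_nonneg i, ?_, ?_, ?_⟩
  · have := trace_eq_sum_eig hH
    rw [h.2] at this
    exact_mod_cast this
  · intro k
    have hcol : ∑ i, ‖U i k‖ ^ 2 = 1 := by
      have hu : (star U * U) k k = 1 := by
        rw [(Matrix.mem_unitaryGroup_iff').mp hH.eigenvectorUnitary.2]
        simp
      rw [Matrix.mul_apply] at hu
      have : ((∑ i, ‖U i k‖ ^ 2 : ℝ) : ℂ) = 1 := by
        rw [← hu]
        push_cast
        refine Finset.sum_congr rfl fun i _ => ?_
        rw [Matrix.star_apply, Complex.star_def, mul_comm, Complex.mul_conj']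
      exact_mod_cast this
    rw [EuclideanSpace.norm_eq]
    rw [show ∑ i, ‖U i k‖ ^ 2 = 1 from hcol]
    simp
  · nth_rewrite 1 [hH.spectral_theorem]
    rw [Unitary.conjStarAlgAut_apply]
    ext i j
    rw [Matrix.sum_apply, Matrix.mul_apply]
    refine Finset.sum_congr rfl fun q _ => ?_
    rw [Matrix.mul_diagonal]
    simp only [Matrix.smul_apply, proj1, Matrix.of_apply, Matrix.star_apply,
      Complex.star_def, Function.comp_apply, smul_eq_mul]
    norm_num [mul_comm, mul_assoc, mul_left_comm]
    exact Or.inl rfl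

lemma kron_proj1 {m n : ℕ} (a : H m) (b : H n) :
    kron (proj1 a) (proj1 b) = proj (tensorVec a b) := by
  ext p q
  simp only [kron, proj1, proj, tensorVec, Matrix.of_apply, _root_.map_mul]
  ring

lemma kron_sums {m n : ℕ} {d e : ℕ} (f : Fin d → ℝ) (g : Fin e → ℝ)
    (A : Fin d → Matrix (Fin m) (Fin m) ℂ) (B : Fin e → Matrix (Fin n) (Fin n) ℂ) :
    kron (∑ i, (f i : ℂ) • A i) (∑ j, (g j : ℂ) • B j)
      = ∑ i, ∑ j, ((f i * g j : ℝ) : ℂ) • kron (A i) (B j) := by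
  ext p q
  simp only [kron, Matrix.of_apply, Matrix.sum_apply, Matrix.smul_apply, smul_eq_mul]
  rw [Finset.sum_mul_sum]
  refine Finset.sum_congr rfl fun i _ => Finset.sum_congr rfl fun j _ => ?_
  push_cast
  ring
lemma E11_zero (E : ∀ m n : ℕ, Matrix (Fin m × Fin n) (Fin m × Fin n) ℂ → ℝ)
    (hM4 : ∀ (m n k : ℕ) (ψ : Fin k → HT m n), (∀ i, ‖ψ i‖ = 1) →
      (∀ i j, i ≠ j → SchmidtOrthogonal (ψ i) (ψ j)) →
      ∀ lam : Fin k → ℂ, (∑ i, ‖lam i‖ ^ 2) = 1 →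
      E m n (proj (∑ i, lam i • ψ i))
        = E k k (proj (stdVec fun i => ‖lam i‖ ^ 2))
          + ∑ i, ‖lam i‖ ^ 2 * E m n (proj (ψ i))) :
    E 1 1 (proj (stdVec fun _ : Fin 1 => (1 : ℝ))) = 0 := by
  have hppsi : ‖stdVec fun _ : Fin 1 => (1 : ℝ)‖ = 1 := by
    rw [EuclideanSpace.norm_eq]
    have : ∑ p : Fin 1 × Fin 1, ‖stdVec (fun _ : Fin 1 => (1 : ℝ)) p‖ ^ 2 = 1 := by
      simp [Fintype.sum_prod_type, stdVec]
    rw [this, Real.sqrt_one]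
  have key := hM4 1 1 1 (fun _ => stdVec fun _ : Fin 1 => (1 : ℝ)) (fun _ => hppsi)
    (fun i j hij => absurd (Subsingleton.elim i j) hij) (fun _ => 1) (by simp)
  simp only [Fin.sum_univ_one, one_smul, norm_one, one_pow, one_mul] at key
  linarith
lemma E_pure_product (E : ∀ m n : ℕ, Matrix (Fin m × Fin n) (Fin m × Fin n) ℂ → ℝ)
    (hM3 : ∀ (m n m' n' : ℕ) (J₁ : Matrix (Fin m') (Fin m) ℂ)
      (J₂ : Matrix (Fin n') (Fin n) ℂ), J₁ᴴ * J₁ = 1 → J₂ᴴ * J₂ = 1 →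
      ∀ ρ, E m' n' (kronR J₁ J₂ * ρ * (kronR J₁ J₂)ᴴ) = E m n ρ)
    (hE11 : E 1 1 (proj (stdVec fun _ : Fin 1 => (1 : ℝ))) = 0)
    {m n : ℕ} {a : H m} {b : H n} (ha : ‖a‖ = 1) (hb : ‖b‖ = 1) :
    E m n (proj (tensorVec a b)) = 0 := by
  set J₁ : Matrix (Fin m) (Fin 1) ℂ := Matrix.of fun i _ => a i with hJ₁
  set J₂ : Matrix (Fin n) (Fin 1) ℂ := Matrix.of fun j _ => b j with hJ₂
  have isoJ : ∀ {d : ℕ} (c : EuclideanSpace ℂ (Fin d)), ‖c‖ = 1 →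
      (Matrix.of fun i (_ : Fin 1) => c i)ᴴ * (Matrix.of fun i (_ : Fin 1) => c i) = 1 := by
    intro d c hc
    ext u v
    have hu : u = v := Subsingleton.elim u v
    subst hu
    have : ((∑ i, ‖c i‖ ^ 2 : ℝ) : ℂ) = 1 := by rw [sum_sq_norm c hc]; norm_num
    rw [Matrix.mul_apply]
    simp only [Matrix.conjTranspose_apply, Matrix.of_apply, Matrix.one_apply_eq]
    rw [← this]
    push_cast
    refine Finset.sum_congr rfl fun i _ => ?_
    rw [Complex.star_def, mul_comm, Complex.mul_conj']
  have him : kronR J₁ J₂ * proj (stdVec fun _ : Fin 1 => (1 : ℝ)) * (kronR J₁ J₂)ᴴ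
      = proj (tensorVec a b) := by
    ext p q
    rw [Matrix.mul_apply]
    simp only [Fintype.sum_prod_type, Fin.sum_univ_one, Matrix.mul_apply,
      Matrix.conjTranspose_apply, kronR, Matrix.of_apply, proj, stdVec, tensorVec,
      Real.sqrt_one, Complex.ofReal_one, if_true]
    simp only [hJ₁, hJ₂, Matrix.of_apply, star_mul', Complex.star_def,
      _root_.map_mul, _root_.map_one, mul_one, one_mul]
    try ring
  have := hM3 1 1 m n J₁ J₂ (isoJ a ha) (isoJ b hb) (proj (stdVec fun _ : Fin 1 => (1 : ℝ)))
  rw [him] at this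
  rw [this, hE11]
lemma convexity_bound (E : ∀ m n : ℕ, Matrix (Fin m × Fin n) (Fin m × Fin n) ℂ → ℝ)
    (hM1 : ∀ (m n : ℕ), (∀ ρ, IsDensity ρ → 0 ≤ E m n ρ) ∧ Continuous (E m n))
    (hM5 : ∀ (m n : ℕ) (σ τ : Matrix (Fin m × Fin n) (Fin m × Fin n) ℂ),
      IsDensity σ → IsDensity τ → ∀ η : ℝ, 0 ≤ η → η ≤ 1 →
      E m n ((η : ℂ) • σ + ((1 - η : ℝ) : ℂ) • τ)
        ≤ η * E m n σ + (1 - η) * E m n τ)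
    (m n : ℕ) {ι : Type} [DecidableEq ι] (s : Finset ι) (p : ι → ℝ)
    (σ : ι → Matrix (Fin m × Fin n) (Fin m × Fin n) ℂ) :
    (∀ i ∈ s, 0 ≤ p i) → (∀ i ∈ s, IsDensity (σ i)) → (∑ i ∈ s, p i = 1) →
    E m n (∑ i ∈ s, (p i : ℂ) • σ i) ≤ ∑ i ∈ s, p i * E m n (σ i) := by
  induction s using Finset.induction_on generalizing p with
  | empty => intro _ _ h; simp at h
  | insert _ _ ha ih =>
    rename_i c s
    intro hp hσ hsum
    rw [Finset.sum_insert ha] at hsum ⊢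
    rw [Finset.sum_insert ha]
    have hpc : 0 ≤ p c := hp c (Finset.mem_insert_self c s)
    have hps : ∀ i ∈ s, 0 ≤ p i := fun i hi => hp i (Finset.mem_insert_of_mem hi)
    have hσc : IsDensity (σ c) := hσ c (Finset.mem_insert_self c s)
    have hσs : ∀ i ∈ s, IsDensity (σ i) := fun i hi => hσ i (Finset.mem_insert_of_mem hi)
    set t : ℝ := ∑ i ∈ s, p i with ht
    have htnn : 0 ≤ t := Finset.sum_nonneg hps
    by_cases h0 : t = 0
    · have hsz : ∑ i ∈ s, p i = 0 := by rw [← ht]; exact h0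
      have hallz : ∀ i ∈ s, p i = 0 := (Finset.sum_eq_zero_iff_of_nonneg hps).mp hsz
      have hc1 : p c = 1 := by rw [← hsum, h0]; ring
      have hmz : ∑ i ∈ s, (p i : ℂ) • σ i = 0 :=
        Finset.sum_eq_zero fun i hi => by rw [hallz i hi]; simp
      rw [hmz, hc1]
      have hz2 : ∑ i ∈ s, p i * E m n (σ i) = 0 :=
        Finset.sum_eq_zero fun i hi => by rw [hallz i hi]; ring
      rw [hz2]
      simp
    · have htpos : 0 < t := lt_of_le_of_ne htnn (Ne.symm h0)
      set q : ι → ℝ := fun i => p i / t with hq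
      have hqnn : ∀ i ∈ s, 0 ≤ q i := fun i hi => div_nonneg (hps i hi) htnn
      have hqsum : ∑ i ∈ s, q i = 1 := by
        rw [hq, ← Finset.sum_div, ← ht, div_self h0]
      set τ : Matrix (Fin m × Fin n) (Fin m × Fin n) ℂ := ∑ i ∈ s, (q i : ℂ) • σ i with hτ
      have hτd : IsDensity τ := isDensity_convex s q σ hqnn hσs hqsum
      have hη1 : p c ≤ 1 := by linarith
      have hts : (1 - p c : ℝ) = t := by linarith
      have hrw : (p c : ℂ) • σ c + ∑ i ∈ s, (p i : ℂ) • σ i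
          = (p c : ℂ) • σ c + ((1 - p c : ℝ) : ℂ) • τ := by
        congr 1
        rw [hτ, Finset.smul_sum]
        refine Finset.sum_congr rfl fun i hi => ?_
        rw [smul_smul, hts, hq]
        norm_cast
        rw [mul_div_cancel₀ _ h0]
      rw [hrw]
      calc E m n ((p c : ℂ) • σ c + ((1 - p c : ℝ) : ℂ) • τ)
          ≤ p c * E m n (σ c) + (1 - p c) * E m n τ :=
            hM5 m n (σ c) τ hσc hτd (p c) hpc hη1
        _ ≤ p c * E m n (σ c) + ∑ i ∈ s, p i * E m n (σ i) := by
            have hih := ih q hqnn hσs hqsum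
            have h2 : (1 - p c) * E m n τ ≤ ∑ i ∈ s, p i * E m n (σ i) := by
              rw [hts]
              calc t * E m n τ ≤ t * ∑ i ∈ s, q i * E m n (σ i) :=
                    mul_le_mul_of_nonneg_left hih htnn
                _ = ∑ i ∈ s, p i * E m n (σ i) := by
                    rw [Finset.mul_sum]
                    refine Finset.sum_congr rfl fun i hi => ?_
                    rw [hq, ← mul_assoc]
                    field_simp
            exact add_le_add_right h2 _

/-- An entanglement measure on mixed states satisfying (M1)-(M5) vanishes on all
separable states. -/
theorem mixed_measure_vanishes_on_separable
    (E : ∀ m n : ℕ, Matrix (Fin m × Fin n) (Fin m × Fin n) ℂ → ℝ)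
    (hM1 : ∀ (m n : ℕ), (∀ ρ, IsDensity ρ → 0 ≤ E m n ρ) ∧ Continuous (E m n))
    (hM2 : ∀ (m n : ℕ) (U : Matrix (Fin m) (Fin m) ℂ) (V : Matrix (Fin n) (Fin n) ℂ),
      U ∈ Matrix.unitaryGroup (Fin m) ℂ → V ∈ Matrix.unitaryGroup (Fin n) ℂ →
      ∀ ρ, E m n (kron U V * ρ * (kron U V)ᴴ) = E m n ρ)
    (hM3 : ∀ (m n m' n' : ℕ) (J₁ : Matrix (Fin m') (Fin m) ℂ)
      (J₂ : Matrix (Fin n') (Fin n) ℂ), J₁ᴴ * J₁ = 1 → J₂ᴴ * J₂ = 1 →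
      ∀ ρ, E m' n' (kronR J₁ J₂ * ρ * (kronR J₁ J₂)ᴴ) = E m n ρ)
    (hM4 : ∀ (m n k : ℕ) (ψ : Fin k → HT m n), (∀ i, ‖ψ i‖ = 1) →
      (∀ i j, i ≠ j → SchmidtOrthogonal (ψ i) (ψ j)) →
      ∀ lam : Fin k → ℂ, (∑ i, ‖lam i‖ ^ 2) = 1 →
      E m n (proj (∑ i, lam i • ψ i))
        = E k k (proj (stdVec fun i => ‖lam i‖ ^ 2))
          + ∑ i, ‖lam i‖ ^ 2 * E m n (proj (ψ i)))
    (hM5 : ∀ (m n : ℕ) (σ τ : Matrix (Fin m × Fin n) (Fin m × Fin n) ℂ),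
      IsDensity σ → IsDensity τ → ∀ η : ℝ, 0 ≤ η → η ≤ 1 →
      E m n ((η : ℂ) • σ + ((1 - η : ℝ) : ℂ) • τ)
        ≤ η * E m n σ + (1 - η) * E m n τ) :
    ∀ (m n : ℕ) (ρ : Matrix (Fin m × Fin n) (Fin m × Fin n) ℂ),
      IsDensity ρ → SepDensity ρ → E m n ρ = 0 := by
  intro m n ρ hρ hsep
  obtain ⟨k, ω, ρ₁, ρ₂, hω, hρ₁, hρ₂, hrep⟩ := hsep
  choose lam1 v1 hlam1 hsum1 hnorm1 hdec1 using fun i => density_decomp (hρ₁ i)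
  choose lam2 v2 hlam2 hsum2 hnorm2 hdec2 using fun i => density_decomp (hρ₂ i)
  have hrep2 : ρ = ∑ x : Fin k × Fin m × Fin n,
      ((ω x.1 * (lam1 x.1 x.2.1 * lam2 x.1 x.2.2) : ℝ) : ℂ) •
        proj (tensorVec (v1 x.1 x.2.1) (v2 x.1 x.2.2)) := by
    rw [hrep, Fintype.sum_prod_type]
    refine Finset.sum_congr rfl fun i _ => ?_
    rw [hdec1 i, hdec2 i, kron_sums, Finset.smul_sum, Fintype.sum_prod_type]
    refine Finset.sum_congr rfl fun j _ => ?_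
    rw [Finset.smul_sum]
    refine Finset.sum_congr rfl fun l _ => ?_
    rw [kron_proj1, smul_smul]
    congr 1
    push_cast
    ring
  have hw1 : ∑ x : Fin k × Fin m × Fin n,
      ω x.1 * (lam1 x.1 x.2.1 * lam2 x.1 x.2.2) = 1 := by
    have h1 := hρ.2
    rw [hrep2, Matrix.trace_sum] at h1
    have h2 : ∀ x : Fin k × Fin m × Fin n,
        (((ω x.1 * (lam1 x.1 x.2.1 * lam2 x.1 x.2.2) : ℝ) : ℂ) •
          proj (tensorVec (v1 x.1 x.2.1) (v2 x.1 x.2.2))).trace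
          = ((ω x.1 * (lam1 x.1 x.2.1 * lam2 x.1 x.2.2) : ℝ) : ℂ) := by
      intro x
      rw [Matrix.trace_smul, trace_proj (norm_tensorVec (hnorm1 x.1 x.2.1) (hnorm2 x.1 x.2.2)),
        smul_eq_mul, mul_one]
    rw [Finset.sum_congr rfl fun x _ => h2 x, ← Complex.ofReal_sum] at h1
    exact_mod_cast h1
  have hle := convexity_bound E hM1 hM5 m n Finset.univ
    (fun x : Fin k × Fin m × Fin n => ω x.1 * (lam1 x.1 x.2.1 * lam2 x.1 x.2.2))
    (fun x : Fin k × Fin m × Fin n => proj (tensorVec (v1 x.1 x.2.1) (v2 x.1 x.2.2)))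
    (fun x _ => mul_nonneg (hω x.1) (mul_nonneg (hlam1 x.1 x.2.1) (hlam2 x.1 x.2.2)))
    (fun x _ => isDensity_proj (norm_tensorVec (hnorm1 x.1 x.2.1) (hnorm2 x.1 x.2.2)))
    hw1
  rw [← hrep2] at hle
  have hzero : ∑ x : Fin k × Fin m × Fin n,
      (ω x.1 * (lam1 x.1 x.2.1 * lam2 x.1 x.2.2)) *
        E m n (proj (tensorVec (v1 x.1 x.2.1) (v2 x.1 x.2.2))) = 0 :=
    Finset.sum_eq_zero fun x _ => by
      rw [E_pure_product E hM3 (E11_zero E hM4) (hnorm1 x.1 x.2.1) (hnorm2 x.1 x.2.2), mul_zero]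
  rw [hzero] at hle
  exact le_antisymm hle ((hM1 m n).1 ρ hρ)

end
end
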